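/- Let n be even and consider the two swap-invariant ideals J₊ := ⟨x^{n/2} − y^{n/2}, x^{n/2+1}, xy, y^{n/2+1}⟩ and J₋ := ⟨x^{n/2} + y^{n/2}, x^{n/2+1}, xy, y^{n/2+1}⟩ of ℂ[x,y]. For each of M± = ℂ[x,y]/J±: (i) the socle {m : x·m = y·m = 0} is one-dimensional, spanned by the class of x^{n/2}; (ii) the swap automorphism τ descends to M± and acts on the socle of M₊ by +1 and on the socle of M₋ by −1. (Hence the socles of the two D_{2n}-constellations at the stacky points B₂ and B₁ are the one-dimensional representations ρ_{n/2} and ρ'_{n/2} respectively; for n = 4 this is the paper's explicit D₈ example with J₋ = ⟨x³, y³, xy, x² + y²⟩, basis {1, x, y, x²} and socle spanned by x².) -/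

import Mathlib

open MvPolynomial

/-- The algebra automorphism `τ : x ↦ y, y ↦ x` of `ℂ[x,y]`. -/
noncomputable def tauA : MvPolynomial (Fin 2) ℂ →ₐ[ℂ] MvPolynomial (Fin 2) ℂ :=
  aeval ![X 1, X 0]

/-- `J₊ := ⟨x^{n/2} − y^{n/2}, x^{n/2+1}, xy, y^{n/2+1}⟩`. -/
noncomputable def Jplus (n : ℕ) : Ideal (MvPolynomial (Fin 2) ℂ) :=
  Ideal.span
    {X 0 ^ (n / 2) - X 1 ^ (n / 2), X 0 ^ (n / 2 + 1), X 0 * X 1, X 1 ^ (n / 2 + 1)}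

/-- `J₋ := ⟨x^{n/2} + y^{n/2}, x^{n/2+1}, xy, y^{n/2+1}⟩`. -/
noncomputable def Jminus (n : ℕ) : Ideal (MvPolynomial (Fin 2) ℂ) :=
  Ideal.span
    {X 0 ^ (n / 2) + X 1 ^ (n / 2), X 0 ^ (n / 2 + 1), X 0 * X 1, X 1 ^ (n / 2 + 1)}

/-- The socle `{m ∈ ℂ[x,y]/I : x·m = 0 ∧ y·m = 0}` of the `ℂ[x,y]`-module `ℂ[x,y]/I`,
as a `ℂ`-subspace. -/
noncomputable def socle (I : Ideal (MvPolynomial (Fin 2) ℂ)) :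
    Submodule ℂ (MvPolynomial (Fin 2) ℂ ⧸ I) where
  carrier := {m | Ideal.Quotient.mk I (X 0) * m = 0 ∧ Ideal.Quotient.mk I (X 1) * m = 0}
  add_mem' := by
    rintro p q ⟨hp1, hp2⟩ ⟨hq1, hq2⟩
    exact ⟨by rw [mul_add, hp1, hq1, add_zero], by rw [mul_add, hp2, hq2, add_zero]⟩
  zero_mem' := ⟨mul_zero _, mul_zero _⟩
  smul_mem' := by
    rintro c p ⟨hp1, hp2⟩
    exact ⟨by rw [mul_smul_comm, hp1, smul_zero], by rw [mul_smul_comm, hp2, smul_zero]⟩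

private lemma fin2_ext {f g : Fin 2 →₀ ℕ} : f = g ↔ f 0 = g 0 ∧ f 1 = g 1 := by
  rw [Finsupp.ext_iff, Fin.forall_fin_two]

private lemma fin2_decomp (d : Fin 2 →₀ ℕ) :
    d = Finsupp.single 0 (d 0) + Finsupp.single 1 (d 1) := by
  rw [fin2_ext]; simp [Finsupp.single_apply]

private lemma xy_eq : (X 0 * X 1 : MvPolynomial (Fin 2) ℂ) =
    monomial (Finsupp.single 0 1 + Finsupp.single 1 1) 1 := by
  rw [X, X, monomial_mul, one_mul]

private lemma van {k : ℕ} (hk : 1 ≤ k) {c : ℂ} (hc : c * c = 1)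
    {p : MvPolynomial (Fin 2) ℂ}
    (hp : p ∈ Ideal.span {X 0 ^ k - c • X 1 ^ k, X 0 ^ (k+1), X 0 * X 1,
      (X 1 : MvPolynomial (Fin 2) ℂ) ^ (k+1)}) :
    (∀ i < k, coeff (Finsupp.single 0 i) p = 0) ∧
    (∀ j < k, coeff (Finsupp.single 1 j) p = 0) ∧
    (coeff (Finsupp.single 0 k) p + c * coeff (Finsupp.single 1 k) p = 0) := by
  have hk0 : k ≠ 0 := Nat.one_le_iff_ne_zero.mp hk
  refine Submodule.span_induction ?base ?zero ?add ?smul hp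
  case zero => simp
  case add =>
    rintro p q hp hq ⟨h1, h2, h3⟩ ⟨g1, g2, g3⟩
    refine ⟨fun i hi => by simp [h1 i hi, g1 i hi],
      fun j hj => by simp [h2 j hj, g2 j hj], ?_⟩
    simp only [coeff_add]
    linear_combination h3 + g3
  case base =>
    intro q hq
    simp only [Set.mem_insert_iff, Set.mem_singleton_iff] at hq
    rcases hq with rfl | rfl | rfl | rfl
    · refine ⟨fun i hi => ?_, fun j hj => ?_, ?_⟩
      · simp [coeff_sub, coeff_smul, coeff_X_pow, fin2_ext, Finsupp.single_apply, hk0]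
        omega
      · simp [coeff_sub, coeff_smul, coeff_X_pow, fin2_ext, Finsupp.single_apply, hk0]
        omega
      · simp [coeff_sub, coeff_smul, coeff_X_pow, fin2_ext, Finsupp.single_apply, hk0]
        linear_combination -hc
    · refine ⟨fun i hi => ?_, fun j hj => ?_, ?_⟩ <;>
        simp [coeff_X_pow, fin2_ext, Finsupp.single_apply, hk0] <;> omega
    · rw [xy_eq]
      refine ⟨fun i hi => ?_, fun j hj => ?_, ?_⟩ <;>
        simp [coeff_monomial, fin2_ext, Finsupp.single_apply, Finsupp.add_apply, hk0] <;>
        omega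
    · refine ⟨fun i hi => ?_, fun j hj => ?_, ?_⟩ <;>
        simp [coeff_X_pow, fin2_ext, Finsupp.single_apply, hk0] <;> omega
  case smul =>
    rintro a q hq ⟨h1, h2, h3⟩
    rw [smul_eq_mul]
    have key : ∀ (v : Fin 2 →₀ ℕ), v 1 = 0 → v 0 < k → coeff v q = 0 := by
      intro v hv1 hv0
      have hv : v = Finsupp.single 0 (v 0) := by
        rw [fin2_ext]; simp [Finsupp.single_apply, hv1]
      rw [hv]; exact h1 _ hv0
    have key' : ∀ (v : Fin 2 →₀ ℕ), v 0 = 0 → v 1 < k → coeff v q = 0 := by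
      intro v hv0 hv1
      have hv : v = Finsupp.single 1 (v 1) := by
        rw [fin2_ext]; simp [Finsupp.single_apply, hv0]
      rw [hv]; exact h2 _ hv1
    refine ⟨fun i hi => ?_, fun j hj => ?_, ?_⟩
    · rw [coeff_mul]
      refine Finset.sum_eq_zero ?_
      rintro ⟨u, v⟩ huv
      rw [Finset.HasAntidiagonal.mem_antidiagonal] at huv
      obtain ⟨e1, e2⟩ := fin2_ext.mp huv
      simp only [Finsupp.add_apply, Finsupp.single_apply] at e1 e2
      norm_num at e1 e2
      have hz := key v (by omega) (by omega)
      simp [hz]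
    · rw [coeff_mul]
      refine Finset.sum_eq_zero ?_
      rintro ⟨u, v⟩ huv
      rw [Finset.HasAntidiagonal.mem_antidiagonal] at huv
      obtain ⟨e1, e2⟩ := fin2_ext.mp huv
      simp only [Finsupp.add_apply, Finsupp.single_apply] at e1 e2
      norm_num at e1 e2
      rcases Nat.eq_zero_or_pos (v 1) with h0 | h0
      · have hz := key v h0 (by omega)
        simp [hz]
      · have hz := key' v (by omega) (by omega)
        simp [hz]
    · rw [coeff_mul, coeff_mul]
      have s1 : ∑ x ∈ Finset.HasAntidiagonal.antidiagonal (Finsupp.single (0:Fin 2) k),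
          coeff x.1 a * coeff x.2 q
          = coeff 0 a * coeff (Finsupp.single 0 k) q := by
        refine Finset.sum_eq_single_of_mem (0, Finsupp.single 0 k)
          (by rw [Finset.HasAntidiagonal.mem_antidiagonal, zero_add]) ?_
        rintro ⟨u, v⟩ huv hne
        rw [Finset.HasAntidiagonal.mem_antidiagonal] at huv
        obtain ⟨e1, e2⟩ := fin2_ext.mp huv
        simp only [Finsupp.add_apply, Finsupp.single_apply] at e1 e2
        norm_num at e1 e2
        rcases Nat.lt_or_ge (v 0) k with h | h
        · rw [key v (by omega) h, mul_zero]
        · exfalso; apply hne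
          have hu : u = 0 := by
            rw [fin2_ext]; simp only [Finsupp.coe_zero, Pi.zero_apply]; omega
          have hv : v = Finsupp.single 0 k := by
            rw [fin2_ext]; simp only [Finsupp.single_apply]; norm_num; omega
          rw [hu, hv]
      have s2 : ∑ x ∈ Finset.HasAntidiagonal.antidiagonal (Finsupp.single (1:Fin 2) k),
          coeff x.1 a * coeff x.2 q
          = coeff 0 a * coeff (Finsupp.single 1 k) q := by
        refine Finset.sum_eq_single_of_mem (0, Finsupp.single 1 k)
          (by rw [Finset.HasAntidiagonal.mem_antidiagonal, zero_add]) ?_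
        rintro ⟨u, v⟩ huv hne
        rw [Finset.HasAntidiagonal.mem_antidiagonal] at huv
        obtain ⟨e1, e2⟩ := fin2_ext.mp huv
        simp only [Finsupp.add_apply, Finsupp.single_apply] at e1 e2
        norm_num at e1 e2
        rcases Nat.lt_or_ge (v 1) k with h | h
        · rcases Nat.eq_zero_or_pos (v 1) with h0 | h0
          · rw [key v h0 (by omega), mul_zero]
          · rw [key' v (by omega) h, mul_zero]
        · exfalso; apply hne
          have hu : u = 0 := by
            rw [fin2_ext]; simp only [Finsupp.coe_zero, Pi.zero_apply]; omega
          have hv : v = Finsupp.single 1 k := by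
            rw [fin2_ext]; simp only [Finsupp.single_apply]; norm_num; omega
          rw [hu, hv]
      rw [s1, s2]
      linear_combination coeff 0 a * h3

private lemma helper00 (f : ℕ → ℂ) (s : Finset ℕ) (m : ℕ) :
    coeff (Finsupp.single 0 m) (∑ i ∈ s, f i • (X 0 : MvPolynomial (Fin 2) ℂ) ^ i)
      = if m ∈ s then f m else 0 := by
  rw [coeff_sum]
  have h : ∀ i ∈ s, coeff (Finsupp.single (0:Fin 2) m) (f i • (X 0 : MvPolynomial (Fin 2) ℂ) ^ i)
      = if i = m then f i else 0 := by
    intro i _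
    rw [coeff_smul, coeff_X_pow]
    by_cases h : i = m
    · simp [h]
    · rw [if_neg, if_neg h, smul_zero]
      rw [fin2_ext]; simp [Finsupp.single_apply, h]
  rw [Finset.sum_congr rfl h, Finset.sum_ite_eq' s m f]

private lemma helper11 (g : ℕ → ℂ) (s : Finset ℕ) (m : ℕ) :
    coeff (Finsupp.single 1 m) (∑ j ∈ s, g j • (X 1 : MvPolynomial (Fin 2) ℂ) ^ j)
      = if m ∈ s then g m else 0 := by
  rw [coeff_sum]
  have h : ∀ j ∈ s, coeff (Finsupp.single (1:Fin 2) m) (g j • (X 1 : MvPolynomial (Fin 2) ℂ) ^ j)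
      = if j = m then g j else 0 := by
    intro j _
    rw [coeff_smul, coeff_X_pow]
    by_cases h : j = m
    · simp [h]
    · rw [if_neg, if_neg h, smul_zero]
      rw [fin2_ext]; simp [Finsupp.single_apply, h]
  rw [Finset.sum_congr rfl h, Finset.sum_ite_eq' s m g]

/-- coefficient of a pure-`y` monomial (`m ≥ 1`) in a sum of `x`-powers is 0 -/
private lemma helper01 (f : ℕ → ℂ) (s : Finset ℕ) (m : ℕ) (hm : m ≠ 0) :
    coeff (Finsupp.single 1 m) (∑ i ∈ s, f i • (X 0 : MvPolynomial (Fin 2) ℂ) ^ i) = 0 := by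
  rw [coeff_sum]
  refine Finset.sum_eq_zero fun i _ => ?_
  rw [coeff_smul, coeff_X_pow, if_neg, smul_zero]
  rw [fin2_ext]; simp [Finsupp.single_apply, hm]
  omega

/-- coefficient of a pure-`x` monomial in a sum of `y`-powers over `Ico 1 k` is 0 -/
private lemma helper10 (g : ℕ → ℂ) (k : ℕ) (m : ℕ) :
    coeff (Finsupp.single 0 m)
      (∑ j ∈ Finset.Ico 1 k, g j • (X 1 : MvPolynomial (Fin 2) ℂ) ^ j) = 0 := by
  rw [coeff_sum]
  refine Finset.sum_eq_zero fun j hj => ?_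
  rw [Finset.mem_Ico] at hj
  rw [coeff_smul, coeff_X_pow, if_neg, smul_zero]
  rw [fin2_ext]; simp [Finsupp.single_apply]
  omega

private lemma sum_indicator (s : Finset ℕ) (a : ℕ) (ha : a ∈ s) (r : ℂ)
    (φ : ℕ → MvPolynomial (Fin 2) ℂ) :
    ∑ i ∈ s, (if i = a then r else 0) • φ i = r • φ a := by
  have h : ∀ i ∈ s, (if i = a then r else 0) • φ i = if i = a then r • φ a else 0 := by
    intro i _
    by_cases h : i = a <;> simp [h]
  rw [Finset.sum_congr rfl h, Finset.sum_ite_eq' s a (fun _ => r • φ a), if_pos ha]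

/-- normal form modulo the ideal -/
private lemma nf {k : ℕ} (hk : 1 ≤ k) {c : ℂ} (hc : c * c = 1)
    (p : MvPolynomial (Fin 2) ℂ) :
    ∃ f g : ℕ → ℂ,
      p - (∑ i ∈ Finset.range (k+1), f i • X 0 ^ i
           + ∑ j ∈ Finset.Ico 1 k, g j • X 1 ^ j)
        ∈ Ideal.span {X 0 ^ k - c • X 1 ^ k, X 0 ^ (k+1), X 0 * X 1,
            (X 1 : MvPolynomial (Fin 2) ℂ) ^ (k+1)} := by
  set J := Ideal.span {X 0 ^ k - c • X 1 ^ k, X 0 ^ (k+1), X 0 * X 1,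
            (X 1 : MvPolynomial (Fin 2) ℂ) ^ (k+1)} with hJ
  have hg1 : (X 0 ^ k - c • X 1 ^ k : MvPolynomial (Fin 2) ℂ) ∈ J := by
    apply Ideal.subset_span; simp
  have hg2 : (X 0 ^ (k+1) : MvPolynomial (Fin 2) ℂ) ∈ J := by
    apply Ideal.subset_span; simp
  have hg3 : (X 0 * X 1 : MvPolynomial (Fin 2) ℂ) ∈ J := by
    apply Ideal.subset_span; simp
  have hg4 : (X 1 ^ (k+1) : MvPolynomial (Fin 2) ℂ) ∈ J := by
    apply Ideal.subset_span; simp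
  induction p using MvPolynomial.induction_on' with
  | add p q hp hq =>
    obtain ⟨f1, g1, h1⟩ := hp
    obtain ⟨f2, g2, h2⟩ := hq
    refine ⟨f1 + f2, g1 + g2, ?_⟩
    have e : (p + q) - (∑ i ∈ Finset.range (k+1), (f1 + f2) i • X 0 ^ i
           + ∑ j ∈ Finset.Ico 1 k, (g1 + g2) j • X 1 ^ j)
        = (p - (∑ i ∈ Finset.range (k+1), f1 i • X 0 ^ i
           + ∑ j ∈ Finset.Ico 1 k, g1 j • X 1 ^ j))
          + (q - (∑ i ∈ Finset.range (k+1), f2 i • X 0 ^ i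
           + ∑ j ∈ Finset.Ico 1 k, g2 j • X 1 ^ j)) := by
      simp only [Pi.add_apply, add_smul, Finset.sum_add_distrib]
      ring
    rw [e]; exact add_mem h1 h2
  | monomial d r =>
    obtain ⟨a, b, rfl⟩ : ∃ a b, d = Finsupp.single 0 a + Finsupp.single 1 b :=
      ⟨_, _, fin2_decomp d⟩
    by_cases hb0 : b = 0
    · subst hb0
      rw [Finsupp.single_zero, add_zero]
      by_cases hak : a ≤ k
      · -- w = r • x^a
        refine ⟨fun i => if i = a then r else 0, 0, ?_⟩
        rw [sum_indicator _ a (Finset.mem_range.mpr (by omega)) r]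
        simp only [Pi.zero_apply, zero_smul, Finset.sum_const_zero, add_zero]
        have e : (monomial (Finsupp.single 0 a)) r = r • (X 0 : MvPolynomial (Fin 2) ℂ) ^ a := by
          rw [X_pow_eq_monomial, smul_monomial, smul_eq_mul, mul_one]
        rw [e, sub_self]; exact zero_mem J
      · refine ⟨0, 0, ?_⟩
        simp only [Pi.zero_apply, zero_smul, Finset.sum_const_zero, add_zero, sub_zero]
        obtain ⟨a', rfl⟩ : ∃ a', a = a' + (k+1) := ⟨a - (k+1), by omega⟩
        have e : (monomial (Finsupp.single (0:Fin 2) (a' + (k+1)))) r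
            = monomial (Finsupp.single 0 a') r * X 0 ^ (k+1) := by
          rw [X_pow_eq_monomial, monomial_mul, mul_one, ← Finsupp.single_add]
        rw [e]; exact Ideal.mul_mem_left J _ hg2
    · by_cases ha0 : a = 0
      · subst ha0
        rw [Finsupp.single_zero, zero_add]
        rcases lt_trichotomy b k with hbk | hbk | hbk
        · -- b < k, b ≥ 1 : w = r • y^b
          refine ⟨0, fun j => if j = b then r else 0, ?_⟩
          rw [sum_indicator _ b (Finset.mem_Ico.mpr ⟨by omega, hbk⟩) r]
          simp only [Pi.zero_apply, zero_smul, Finset.sum_const_zero, zero_add]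
          have e : (monomial (Finsupp.single 1 b)) r = r • (X 1 : MvPolynomial (Fin 2) ℂ) ^ b := by
            rw [X_pow_eq_monomial, smul_monomial, smul_eq_mul, mul_one]
          rw [e, sub_self]; exact zero_mem J
        · -- b = k : w = (r*c) • x^k
          subst hbk
          refine ⟨fun i => if i = b then r * c else 0, 0, ?_⟩
          rw [sum_indicator _ b (Finset.mem_range.mpr (by omega)) (r * c)]
          simp only [Pi.zero_apply, zero_smul, Finset.sum_const_zero, add_zero]
          have e : (monomial (Finsupp.single (1:Fin 2) b)) r - (r * c) • (X 0:MvPolynomial (Fin 2) ℂ) ^ b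
              = (-(r * c)) • (X 0 ^ b - c • X 1 ^ b) := by
            have hy : (monomial (Finsupp.single (1:Fin 2) b)) r
                = r • (X 1 : MvPolynomial (Fin 2) ℂ) ^ b := by
              rw [X_pow_eq_monomial, smul_monomial, smul_eq_mul, mul_one]
            rw [hy, smul_sub, smul_smul]
            have h2 : -(r * c) * c = -r := by
              rw [neg_mul, mul_assoc, hc, mul_one]
            rw [h2, neg_smul, neg_smul, sub_neg_eq_add]
            abel
          rw [e, smul_eq_C_mul]; exact Ideal.mul_mem_left J _ hg1
        · refine ⟨0, 0, ?_⟩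
          simp only [Pi.zero_apply, zero_smul, Finset.sum_const_zero, add_zero, sub_zero]
          obtain ⟨b', rfl⟩ : ∃ b', b = b' + (k+1) := ⟨b - (k+1), by omega⟩
          have e : (monomial (Finsupp.single (1:Fin 2) (b' + (k+1)))) r
              = monomial (Finsupp.single 1 b') r * X 1 ^ (k+1) := by
            rw [X_pow_eq_monomial, monomial_mul, mul_one, ← Finsupp.single_add]
          rw [e]; exact Ideal.mul_mem_left J _ hg4
      · -- a ≥ 1, b ≥ 1 : divisible by xy
        refine ⟨0, 0, ?_⟩
        simp only [Pi.zero_apply, zero_smul, Finset.sum_const_zero, add_zero, sub_zero]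
        obtain ⟨a', rfl⟩ : ∃ a', a = a' + 1 := ⟨a - 1, by omega⟩
        obtain ⟨b', rfl⟩ : ∃ b', b = b' + 1 := ⟨b - 1, by omega⟩
        have hd : (Finsupp.single (0:Fin 2) (a'+1) + Finsupp.single 1 (b'+1))
            = (Finsupp.single 0 a' + Finsupp.single 1 b')
              + (Finsupp.single 0 1 + Finsupp.single 1 1) := by
          rw [fin2_ext]
          simp [Finsupp.single_apply, Finsupp.add_apply]
        have e : (monomial (Finsupp.single (0:Fin 2) (a'+1) + Finsupp.single 1 (b'+1))) r
            = monomial (Finsupp.single 0 a' + Finsupp.single 1 b') r * (X 0 * X 1) := by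
          rw [xy_eq, monomial_mul, mul_one, hd]
        rw [e]; exact Ideal.mul_mem_left J _ hg3

private lemma master {k : ℕ} (hk : 1 ≤ k) {c : ℂ} (hc : c * c = 1)
    {J : Ideal (MvPolynomial (Fin 2) ℂ)}
    (hJ : J = Ideal.span {X 0 ^ k - c • X 1 ^ k, X 0 ^ (k+1), X 0 * X 1,
      (X 1 : MvPolynomial (Fin 2) ℂ) ^ (k+1)}) :
    socle J = Submodule.span ℂ {Ideal.Quotient.mk J (X 0 ^ k)} ∧
    Module.finrank ℂ (socle J) = 1 ∧
    ∃ τbar : (MvPolynomial (Fin 2) ℂ ⧸ J) →ₗ[ℂ] (MvPolynomial (Fin 2) ℂ ⧸ J),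
      (∀ f : MvPolynomial (Fin 2) ℂ,
        τbar (Ideal.Quotient.mk J f) = Ideal.Quotient.mk J (tauA f)) ∧
      τbar (Ideal.Quotient.mk J (X 0 ^ k)) = c • Ideal.Quotient.mk J (X 0 ^ k) := by
  have hk0 : k ≠ 0 := Nat.one_le_iff_ne_zero.mp hk
  subst hJ
  set J := Ideal.span {X 0 ^ k - c • X 1 ^ k, X 0 ^ (k+1), X 0 * X 1,
      (X 1 : MvPolynomial (Fin 2) ℂ) ^ (k+1)} with hJ
  have hg1 : (X 0 ^ k - c • X 1 ^ k : MvPolynomial (Fin 2) ℂ) ∈ J := by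
    apply Ideal.subset_span; simp
  have hg2 : (X 0 ^ (k+1) : MvPolynomial (Fin 2) ℂ) ∈ J := by
    apply Ideal.subset_span; simp
  have hg3 : (X 0 * X 1 : MvPolynomial (Fin 2) ℂ) ∈ J := by
    apply Ideal.subset_span; simp
  have hg4 : (X 1 ^ (k+1) : MvPolynomial (Fin 2) ℂ) ∈ J := by
    apply Ideal.subset_span; simp
  -- y^k ≡ c x^k
  have hyx : (X 1 : MvPolynomial (Fin 2) ℂ) ^ k - c • X 0 ^ k
      = (-c) • ((X 0 : MvPolynomial (Fin 2) ℂ) ^ k - c • X 1 ^ k) := by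
    rw [smul_sub, smul_smul, neg_mul, hc, neg_smul, neg_smul, one_smul, sub_neg_eq_add]
    abel
  have hyxJ : (X 1 : MvPolynomial (Fin 2) ℂ) ^ k - c • X 0 ^ k ∈ J := by
    rw [hyx, smul_eq_C_mul]; exact Ideal.mul_mem_left J _ hg1
  -- x^k ∉ J
  have hne : Ideal.Quotient.mk J (X 0 ^ k) ≠ 0 := by
    intro h
    rw [Ideal.Quotient.eq_zero_iff_mem] at h
    obtain ⟨-, -, v3⟩ := van hk hc h
    rw [coeff_X_pow, coeff_X_pow, if_pos rfl, if_neg] at v3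
    · simp at v3
    · rw [fin2_ext]; simp [Finsupp.single_apply, hk0]
  -- socle = span
  have hspan : socle J = Submodule.span ℂ {Ideal.Quotient.mk J (X 0 ^ k)} := by
    apply le_antisymm
    · intro mbar hm
      obtain ⟨m, rfl⟩ := Ideal.Quotient.mk_surjective mbar
      obtain ⟨h1, h2⟩ := hm
      rw [← map_mul, Ideal.Quotient.eq_zero_iff_mem] at h1 h2
      obtain ⟨f, g, hw⟩ := nf hk hc m
      set A := ∑ i ∈ Finset.range (k+1), f i • (X 0 : MvPolynomial (Fin 2) ℂ) ^ i with hA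
      set B := ∑ j ∈ Finset.Ico 1 k, g j • (X 1 : MvPolynomial (Fin 2) ℂ) ^ j with hB
      have hxw : X 0 * (A + B) ∈ J := by
        have h3 := Ideal.mul_mem_left J (X 0) hw
        rw [mul_sub] at h3
        have := sub_mem h1 h3
        rwa [sub_sub_cancel] at this
      have hyw : X 1 * (A + B) ∈ J := by
        have h3 := Ideal.mul_mem_left J (X 1) hw
        rw [mul_sub] at h3
        have := sub_mem h2 h3
        rwa [sub_sub_cancel] at this
      obtain ⟨v1x, v2x, v3x⟩ := van hk hc hxw
      obtain ⟨v1y, v2y, v3y⟩ := van hk hc hyw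
      -- coefficient extraction
      have ew : ∀ i, coeff (Finsupp.single 0 (i+1)) (X 0 * (A + B))
          = coeff (Finsupp.single 0 i) (A + B) := by
        intro i
        have hsi : Finsupp.single (0:Fin 2) (i+1)
            = Finsupp.single 0 1 + Finsupp.single 0 i := by
          rw [← Finsupp.single_add, Nat.add_comm]
        rw [hsi, coeff_X_mul]
      have ew' : ∀ j, coeff (Finsupp.single 1 (j+1)) (X 1 * (A + B))
          = coeff (Finsupp.single 1 j) (A + B) := by
        intro j
        have hsj : Finsupp.single (1:Fin 2) (j+1)
            = Finsupp.single 1 1 + Finsupp.single 1 j := by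
          rw [← Finsupp.single_add, Nat.add_comm]
        rw [hsj, coeff_X_mul]
      have cA : ∀ i, i ≤ k → coeff (Finsupp.single 0 i) (A + B) = f i := by
        intro i hi
        rw [coeff_add, hA, hB, helper00, helper10, if_pos (Finset.mem_range.mpr (by omega)),
          add_zero]
      have cB : ∀ j, 1 ≤ j → j ≤ k → coeff (Finsupp.single 1 j) (A + B)
          = if j ∈ Finset.Ico 1 k then g j else 0 := by
        intro j hj1 hj2
        rw [coeff_add, hA, hB, helper01 _ _ _ (by omega), helper11, zero_add]
      -- cross terms vanish under x-shift / y-shift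
      have crossx : coeff (Finsupp.single 1 k) (X 0 * (A + B)) = 0 := by
        rw [coeff_X_mul', if_neg]
        rw [Finsupp.support_single_ne_zero 1 hk0]
        simp
      have crossy : coeff (Finsupp.single 0 k) (X 1 * (A + B)) = 0 := by
        rw [coeff_X_mul', if_neg]
        rw [Finsupp.support_single_ne_zero 0 hk0]
        simp
      have hf : ∀ i, i < k → f i = 0 := by
        intro i hi
        rcases Nat.lt_or_ge (i+1) k with h | h
        · rw [← cA i (by omega), ← ew i]
          exact v1x _ h
        · have hik : i + 1 = k := by omega
          have := v3x
          rw [crossx, mul_zero, add_zero, ← hik, ew i, cA i (by omega)] at this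
          exact this
      have hg : ∀ j, 1 ≤ j → j < k → g j = 0 := by
        intro j hj1 hj2
        have e1 : coeff (Finsupp.single 1 j) (A + B) = g j := by
          rw [cB j hj1 (by omega), if_pos (Finset.mem_Ico.mpr ⟨hj1, hj2⟩)]
        rcases Nat.lt_or_ge (j+1) k with h | h
        · rw [← e1, ← ew' j]
          exact v2y _ h
        · have hjk : j + 1 = k := by omega
          have := v3y
          rw [crossy, ← hjk, ew' j, e1] at this
          have hcne : c ≠ 0 := by
            intro h0; rw [h0, mul_zero] at hc; exact one_ne_zero hc.symm
          rw [zero_add] at this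
          exact (mul_eq_zero.mp this).resolve_left hcne
      have hAe : A = f k • (X 0 : MvPolynomial (Fin 2) ℂ) ^ k := by
        rw [hA, Finset.sum_eq_single_of_mem k (Finset.mem_range.mpr (by omega))]
        intro i hi hne'
        rw [hf i (by rw [Finset.mem_range] at hi; omega), zero_smul]
      have hBe : B = 0 := by
        rw [hB]
        refine Finset.sum_eq_zero fun j hj => ?_
        rw [Finset.mem_Ico] at hj
        rw [hg j hj.1 hj.2, zero_smul]
      rw [Submodule.mem_span_singleton]
      refine ⟨f k, ?_⟩
      have e2 : Ideal.Quotient.mk J m = Ideal.Quotient.mk J (A + B) :=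
        Ideal.Quotient.eq.mpr hw
      have e3 := map_smul (Ideal.Quotient.mkₐ ℂ J) (f k) ((X 0 : MvPolynomial (Fin 2) ℂ) ^ k)
      rw [Ideal.Quotient.mkₐ_eq_mk] at e3
      rw [← e3, ← hAe, e2, hBe, add_zero]
    · rw [Submodule.span_le, Set.singleton_subset_iff]
      refine ⟨?_, ?_⟩
      · rw [← map_mul, Ideal.Quotient.eq_zero_iff_mem]
        have : (X 0 : MvPolynomial (Fin 2) ℂ) * X 0 ^ k = X 0 ^ (k+1) := by ring
        rw [this]; exact hg2
      · rw [← map_mul, Ideal.Quotient.eq_zero_iff_mem]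
        obtain ⟨k', rfl⟩ : ∃ k', k = k' + 1 := ⟨k - 1, by omega⟩
        have : (X 1 : MvPolynomial (Fin 2) ℂ) * X 0 ^ (k'+1) = X 0 ^ k' * (X 0 * X 1) := by
          ring
        rw [this]; exact Ideal.mul_mem_left J _ hg3
  refine ⟨hspan, ?_, ?_⟩
  · rw [hspan]; exact finrank_span_singleton hne
  · -- tau descends
    have htx : tauA (X 0) = (X 1 : MvPolynomial (Fin 2) ℂ) := by simp [tauA]
    have hty : tauA (X 1) = (X 0 : MvPolynomial (Fin 2) ℂ) := by simp [tauA]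
    have hcomap : ∀ a ∈ J, tauA a ∈ J := by
      intro a ha
      have hle : J ≤ Ideal.comap (tauA : MvPolynomial (Fin 2) ℂ →+* MvPolynomial (Fin 2) ℂ) J := by
        rw [hJ, Ideal.span_le]
        rintro q hq
        simp only [Set.mem_insert_iff, Set.mem_singleton_iff] at hq
        rcases hq with rfl | rfl | rfl | rfl
        · simp only [SetLike.mem_coe, Ideal.mem_comap]
          show tauA _ ∈ J
          rw [map_sub, map_smul, map_pow, map_pow, htx, hty]
          exact hyxJ
        · simp only [SetLike.mem_coe, Ideal.mem_comap]
          show tauA _ ∈ J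
          rw [map_pow, htx]
          exact hg4
        · simp only [SetLike.mem_coe, Ideal.mem_comap]
          show tauA _ ∈ J
          rw [map_mul, htx, hty, mul_comm]
          exact hg3
        · simp only [SetLike.mem_coe, Ideal.mem_comap]
          show tauA _ ∈ J
          rw [map_pow, hty]
          exact hg2
      exact hle ha
    have hlift : ∀ a ∈ J, ((Ideal.Quotient.mkₐ ℂ J).comp tauA) a = 0 := by
      intro a ha
      simp only [AlgHom.coe_comp, Function.comp_apply, Ideal.Quotient.mkₐ_eq_mk]
      rw [Ideal.Quotient.eq_zero_iff_mem]
      exact hcomap a ha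
    refine ⟨(Ideal.Quotient.liftₐ J ((Ideal.Quotient.mkₐ ℂ J).comp tauA) hlift).toLinearMap,
      ?_, ?_⟩
    · intro f
      simp [Ideal.Quotient.liftₐ_apply, Ideal.Quotient.lift_mk]
      rfl
    · have e1 : (Ideal.Quotient.liftₐ J ((Ideal.Quotient.mkₐ ℂ J).comp tauA) hlift).toLinearMap
          (Ideal.Quotient.mk J (X 0 ^ k)) = Ideal.Quotient.mk J (tauA (X 0 ^ k)) := by
        simp [Ideal.Quotient.liftₐ_apply, Ideal.Quotient.lift_mk]
        rfl
      rw [e1, map_pow, htx]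
      have e2 : Ideal.Quotient.mk J ((X 1 : MvPolynomial (Fin 2) ℂ) ^ k)
          = Ideal.Quotient.mk J (c • X 0 ^ k) := Ideal.Quotient.eq.mpr hyxJ
      have e3 := map_smul (Ideal.Quotient.mkₐ ℂ J) c ((X 0 : MvPolynomial (Fin 2) ℂ) ^ k)
      rw [Ideal.Quotient.mkₐ_eq_mk] at e3
      rw [e2, e3]


/-- for even `n`, the socles of `M± = ℂ[x,y]/J±` are one-dimensional,
spanned by the class of `x^{n/2}`, and the swap `τ` descends to `M±`, acting on the socle
of `M₊` by `+1` and on the socle of `M₋` by `−1`. -/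
theorem stacky_point_socles (n : ℕ) (hn : 1 ≤ n) (heven : Even n) :
    (socle (Jplus n) = Submodule.span ℂ {Ideal.Quotient.mk (Jplus n) (X 0 ^ (n / 2))} ∧
      Module.finrank ℂ (socle (Jplus n)) = 1 ∧
      ∃ τbar : (MvPolynomial (Fin 2) ℂ ⧸ Jplus n) →ₗ[ℂ] (MvPolynomial (Fin 2) ℂ ⧸ Jplus n),
        (∀ f : MvPolynomial (Fin 2) ℂ,
          τbar (Ideal.Quotient.mk (Jplus n) f) = Ideal.Quotient.mk (Jplus n) (tauA f)) ∧
        τbar (Ideal.Quotient.mk (Jplus n) (X 0 ^ (n / 2))) =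
          Ideal.Quotient.mk (Jplus n) (X 0 ^ (n / 2))) ∧
    (socle (Jminus n) = Submodule.span ℂ {Ideal.Quotient.mk (Jminus n) (X 0 ^ (n / 2))} ∧
      Module.finrank ℂ (socle (Jminus n)) = 1 ∧
      ∃ τbar : (MvPolynomial (Fin 2) ℂ ⧸ Jminus n) →ₗ[ℂ] (MvPolynomial (Fin 2) ℂ ⧸ Jminus n),
        (∀ f : MvPolynomial (Fin 2) ℂ,
          τbar (Ideal.Quotient.mk (Jminus n) f) = Ideal.Quotient.mk (Jminus n) (tauA f)) ∧
        τbar (Ideal.Quotient.mk (Jminus n) (X 0 ^ (n / 2))) =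
          -Ideal.Quotient.mk (Jminus n) (X 0 ^ (n / 2))) := by
  have hk : 1 ≤ n / 2 := by
    obtain ⟨m, rfl⟩ := heven
    omega
  have hJp : Jplus n = Ideal.span {X 0 ^ (n/2) - (1:ℂ) • X 1 ^ (n/2), X 0 ^ (n/2+1),
      X 0 * X 1, (X 1 : MvPolynomial (Fin 2) ℂ) ^ (n/2+1)} := by
    unfold Jplus
    rw [one_smul]
  have hJm : Jminus n = Ideal.span {X 0 ^ (n/2) - (-1:ℂ) • X 1 ^ (n/2), X 0 ^ (n/2+1),
      X 0 * X 1, (X 1 : MvPolynomial (Fin 2) ℂ) ^ (n/2+1)} := by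
    unfold Jminus
    rw [neg_smul, one_smul, sub_neg_eq_add]
  obtain ⟨p1, p2, τp, hp1, hp2⟩ := master hk (by norm_num : (1:ℂ) * 1 = 1) hJp
  obtain ⟨q1, q2, τq, hq1, hq2⟩ := master hk (by norm_num : (-1:ℂ) * (-1) = 1) hJm
  refine ⟨⟨p1, p2, τp, hp1, ?_⟩, ⟨q1, q2, τq, hq1, ?_⟩⟩
  · rw [hp2, one_smul]
  · rw [hq2, neg_one_smul]
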